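/- For m ≥ 3 and n ∈ {1,2,3}, the domination polynomial of the lollipop graph L_{m,n} is unimodal, with a mode at ⌊m/2⌋+1 if n=1, at ⌈m/2⌉+1 if n=2, and at ⌊m/2⌋+2 if n=3. -/
import Mathlib


/-- A finite set of vertices dominates the graph. -/
def Dominates {V : Type*} (G : SimpleGraph V) (U : Finset V) : Prop :=
  ∀ v : V, v ∈ U ∨ ∃ u ∈ U, G.Adj u v

/-- The number of dominating sets of size `i`. -/
noncomputable def domCount {V : Type*} [Fintype V] (G : SimpleGraph V) (i : ℕ) : ℕ :=
  Nat.card {U : Finset V // U.card = i ∧ Dominates G U}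

/-- The asymmetric adjacency relation of the lollipop graph `L_{m,n}`: a complete graph on
`Fin m`, a path on `Fin n`, and an edge joining vertex `0` of the complete graph to
the endpoint `0` of the path. -/
def lollipopRel {m n : ℕ} : (Fin m ⊕ Fin n) → (Fin m ⊕ Fin n) → Prop
  | .inl a, .inl b => a ≠ b
  | .inl a, .inr i => (a : ℕ) = 0 ∧ (i : ℕ) = 0
  | .inr i, .inr j => (i : ℕ) + 1 = (j : ℕ)
  | _, _ => False

/-- The `(m,n)`-lollipop graph. -/
def lollipop (m n : ℕ) : SimpleGraph (Fin m ⊕ Fin n) :=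
  SimpleGraph.fromRel lollipopRel

/-- The coefficient sequence is non-decreasing up to `k` and non-increasing afterwards,
so in particular `k` is a mode. -/
def UnimodalWithMode (d : ℕ → ℕ) (k : ℕ) : Prop :=
  (∀ i < k, d i ≤ d (i + 1)) ∧ (∀ i, k ≤ i → d (i + 1) ≤ d i)

set_option linter.unnecessarySeqFocus false



open Finset Classical in
lemma domCount_eq {V : Type*} [Fintype V] [DecidableEq V] (G : SimpleGraph V) (i : ℕ) :
    domCount G i = (univ.filter (fun U : Finset V => U.card = i ∧ Dominates G U)).card := by
  rw [domCount, Nat.card_eq_fintype_card, Fintype.card_subtype]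

open Finset in
lemma card_filter_subset_eq {V : Type*} [Fintype V] [DecidableEq V] (B : Finset V) (i : ℕ) :
    (univ.filter (fun U : Finset V => U.card = i ∧ U ⊆ B)).card = B.card.choose i := by
  rw [← Finset.card_powersetCard]
  congr 1
  ext U
  simp [Finset.mem_powersetCard, and_comm]

open Finset Classical in
lemma count_two {V : Type*} [Fintype V] [DecidableEq V] (G : SimpleGraph V)
    (B1 B2 : Finset V)
    (h : ∀ U : Finset V, ¬ Dominates G U ↔ U ⊆ B1 ∨ U ⊆ B2) (i : ℕ) :
    domCount G i + B1.card.choose i + B2.card.choose i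
      = (Fintype.card V).choose i + (B1 ∩ B2).card.choose i := by
  classical
  have hpart : (univ.filter (fun U : Finset V => U.card = i ∧ Dominates G U)).card
      + (univ.filter (fun U : Finset V => U.card = i ∧ ¬ Dominates G U)).card
      = (Fintype.card V).choose i := by
    have h1 := Finset.card_filter_add_card_filter_not
      (s := univ.filter (fun U : Finset V => U.card = i)) (p := fun U => Dominates G U)
    rw [Finset.filter_filter, Finset.filter_filter] at h1
    rw [h1, ← Finset.card_univ, ← card_filter_subset_eq (univ : Finset V) i]
    congr 1
    ext U
    simp
  have hnd : (univ.filter (fun U : Finset V => U.card = i ∧ ¬ Dominates G U)).card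
      + (B1 ∩ B2).card.choose i = B1.card.choose i + B2.card.choose i := by
    have he : univ.filter (fun U : Finset V => U.card = i ∧ ¬ Dominates G U)
        = univ.filter (fun U : Finset V => U.card = i ∧ U ⊆ B1)
          ∪ univ.filter (fun U : Finset V => U.card = i ∧ U ⊆ B2) := by
      ext U
      simp only [mem_filter, mem_univ, true_and, mem_union, h U]
      tauto
    have hi : univ.filter (fun U : Finset V => U.card = i ∧ U ⊆ B1)
          ∩ univ.filter (fun U : Finset V => U.card = i ∧ U ⊆ B2)
        = univ.filter (fun U : Finset V => U.card = i ∧ U ⊆ B1 ∩ B2) := by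
      ext U
      simp only [mem_inter, mem_filter, mem_univ, true_and, Finset.subset_inter_iff]
      tauto
    have := Finset.card_union_add_card_inter
      (univ.filter (fun U : Finset V => U.card = i ∧ U ⊆ B1))
      (univ.filter (fun U : Finset V => U.card = i ∧ U ⊆ B2))
    rw [hi, card_filter_subset_eq, card_filter_subset_eq, card_filter_subset_eq, ← he] at this
    omega
  rw [domCount_eq]
  omega

open Finset in
lemma filter_sub_inter {V : Type*} [Fintype V] [DecidableEq V] (i : ℕ) (B C : Finset V) :
    univ.filter (fun U : Finset V => U.card = i ∧ U ⊆ B)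
      ∩ univ.filter (fun U : Finset V => U.card = i ∧ U ⊆ C)
    = univ.filter (fun U : Finset V => U.card = i ∧ U ⊆ B ∩ C) := by
  ext U
  simp only [mem_inter, mem_filter, mem_univ, true_and, Finset.subset_inter_iff]
  tauto

open Finset Classical in
lemma count_three {V : Type*} [Fintype V] [DecidableEq V] (G : SimpleGraph V)
    (B1 B2 B3 : Finset V)
    (h : ∀ U : Finset V, ¬ Dominates G U ↔ U ⊆ B1 ∨ U ⊆ B2 ∨ U ⊆ B3) (i : ℕ) :
    domCount G i + B1.card.choose i + B2.card.choose i + B3.card.choose i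
        + (B1 ∩ B2 ∩ B3).card.choose i
      = (Fintype.card V).choose i + (B1 ∩ B2).card.choose i + (B1 ∩ B3).card.choose i
        + (B2 ∩ B3).card.choose i := by
  classical
  set F1 := univ.filter (fun U : Finset V => U.card = i ∧ U ⊆ B1) with hF1
  set F2 := univ.filter (fun U : Finset V => U.card = i ∧ U ⊆ B2) with hF2
  set F3 := univ.filter (fun U : Finset V => U.card = i ∧ U ⊆ B3) with hF3
  have hpart : (univ.filter (fun U : Finset V => U.card = i ∧ Dominates G U)).card
      + (univ.filter (fun U : Finset V => U.card = i ∧ ¬ Dominates G U)).card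
      = (Fintype.card V).choose i := by
    have h1 := Finset.card_filter_add_card_filter_not
      (s := univ.filter (fun U : Finset V => U.card = i)) (p := fun U => Dominates G U)
    rw [Finset.filter_filter, Finset.filter_filter] at h1
    rw [h1, ← Finset.card_univ, ← card_filter_subset_eq (univ : Finset V) i]
    congr 1
    ext U
    simp
  have he : univ.filter (fun U : Finset V => U.card = i ∧ ¬ Dominates G U) = F1 ∪ F2 ∪ F3 := by
    ext U
    simp only [hF1, hF2, hF3, mem_filter, mem_univ, true_and, mem_union, h U]
    tauto
  have e1 := Finset.card_union_add_card_inter F1 F2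
  have e2 := Finset.card_union_add_card_inter (F1 ∪ F2) F3
  have e3 : (F1 ∪ F2) ∩ F3 = (F1 ∩ F3) ∪ (F2 ∩ F3) := Finset.union_inter_distrib_right ..
  have e4 := Finset.card_union_add_card_inter (F1 ∩ F3) (F2 ∩ F3)
  have e5 : (F1 ∩ F3) ∩ (F2 ∩ F3) = (F1 ∩ F2) ∩ F3 := by
    ext x; simp only [mem_inter]; tauto
  rw [e3] at e2
  rw [e5] at e4
  have c12 : (F1 ∩ F2).card = (B1 ∩ B2).card.choose i := by
    rw [hF1, hF2, filter_sub_inter, card_filter_subset_eq]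
  have c13 : (F1 ∩ F3).card = (B1 ∩ B3).card.choose i := by
    rw [hF1, hF3, filter_sub_inter, card_filter_subset_eq]
  have c23 : (F2 ∩ F3).card = (B2 ∩ B3).card.choose i := by
    rw [hF2, hF3, filter_sub_inter, card_filter_subset_eq]
  have c123 : ((F1 ∩ F2) ∩ F3).card = (B1 ∩ B2 ∩ B3).card.choose i := by
    rw [hF1, hF2, hF3, filter_sub_inter, filter_sub_inter, card_filter_subset_eq]
  have c1 : F1.card = B1.card.choose i := by rw [hF1, card_filter_subset_eq]
  have c2 : F2.card = B2.card.choose i := by rw [hF2, card_filter_subset_eq]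
  have c3 : F3.card = B3.card.choose i := by rw [hF3, card_filter_subset_eq]
  rw [he] at hpart
  rw [domCount_eq]
  omega

lemma choose_mono_up {n k : ℕ} (h : 2 * k + 1 ≤ n) : n.choose k ≤ n.choose (k + 1) := by
  rcases eq_or_lt_of_le h with heq | hlt
  · have h1 : n - k = k + 1 := by omega
    have h2 : k ≤ n := by omega
    have h3 : n.choose (n - k) = n.choose k := Nat.choose_symm h2
    rw [← h3, h1]
  · exact Nat.choose_le_succ_of_lt_half_left (by omega)

lemma choose_mono_down {n k : ℕ} (h : n ≤ 2 * k + 1) : n.choose (k + 1) ≤ n.choose k := by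
  by_cases hk : k + 1 ≤ n
  · have h1 : n.choose (k + 1) = n.choose (n - (k + 1)) := (Nat.choose_symm hk).symm
    have h2 : n.choose (n - k) = n.choose k := Nat.choose_symm (by omega)
    have h3 : n - k = (n - (k + 1)) + 1 := by omega
    rw [h1, ← h2, h3]
    exact choose_mono_up (by omega)
  · rw [Nat.choose_eq_zero_of_lt (by omega)]
    exact Nat.zero_le _



lemma lollipop_adj {m n : ℕ} (u v : Fin m ⊕ Fin n) :
    (lollipop m n).Adj u v ↔ u ≠ v ∧ (lollipopRel u v ∨ lollipopRel v u) :=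
  SimpleGraph.fromRel_adj _ _ _

open Finset in
lemma notdom1 {m : ℕ} (hm : 3 ≤ m) (U : Finset (Fin m ⊕ Fin 1)) :
    ¬ Dominates (lollipop m 1) U ↔
      U ⊆ ((univ : Finset (Fin m)).erase ⟨0, by omega⟩).image Sum.inl
        ∨ U ⊆ {Sum.inr ⟨0, Nat.one_pos⟩} := by
  constructor
  · intro hnd
    by_contra hbad
    push_neg at hbad
    obtain ⟨h1, h2⟩ := hbad
    rw [Finset.not_subset] at h1 h2
    obtain ⟨x, hxU, hx⟩ := h1
    obtain ⟨y, hyU, hy⟩ := h2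
    obtain ⟨b, rfl⟩ : ∃ b : Fin m, y = Sum.inl b := by
      rcases y with b | j
      · exact ⟨b, rfl⟩
      · exfalso; apply hy; simp [Subsingleton.elim j ⟨0, Nat.one_pos⟩]
    have hx' : x = Sum.inl ⟨0, by omega⟩ ∨ x = Sum.inr ⟨0, Nat.one_pos⟩ := by
      rcases x with a | j
      · left
        simp only [mem_image, mem_erase, mem_univ, and_true] at hx
        have : a = ⟨0, by omega⟩ := by
          by_contra hne; exact hx ⟨a, hne, rfl⟩
        rw [this]
      · right; simp [Subsingleton.elim j ⟨0, Nat.one_pos⟩]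
    apply hnd
    rintro (c | i)
    · by_cases hc : Sum.inl c ∈ U
      · exact Or.inl hc
      · refine Or.inr ⟨Sum.inl b, hyU, ?_⟩
        rw [lollipop_adj]
        have hbc : b ≠ c := by rintro rfl; exact hc hyU
        exact ⟨by simp [hbc], Or.inl hbc⟩
    · have hi : (i : ℕ) = 0 := by omega
      rcases hx' with rfl | rfl
      · refine Or.inr ⟨_, hxU, ?_⟩
        rw [lollipop_adj]
        refine ⟨by simp, Or.inl ?_⟩
        exact ⟨rfl, hi⟩
      · left
        have : i = ⟨0, Nat.one_pos⟩ := by ext; omega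
        rw [this]; exact hxU
  · rintro (h | h) hdom
    · rcases hdom (Sum.inr ⟨0, Nat.one_pos⟩) with hin | ⟨u, huU, hadj⟩
      · have := h hin; simp at this
      · have := h huU
        simp only [mem_image, mem_erase, mem_univ, and_true] at this
        obtain ⟨a, ha0, rfl⟩ := this
        rw [lollipop_adj] at hadj
        rcases hadj.2 with hr | hr
        · obtain ⟨ha, -⟩ := hr
          exact ha0 (by ext; simpa using ha)
        · exact hr
    · rcases hdom (Sum.inl ⟨1, by omega⟩) with hin | ⟨u, huU, hadj⟩
      · have := h hin; simp at this
      · have := h huU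
        simp only [mem_singleton] at this
        subst this
        rw [lollipop_adj] at hadj
        rcases hadj.2 with hr | hr
        · exact hr
        · obtain ⟨ha, -⟩ := hr
          simp at ha

open Finset in
lemma notdom2 {m : ℕ} (hm : 3 ≤ m) (U : Finset (Fin m ⊕ Fin 2)) :
    ¬ Dominates (lollipop m 2) U ↔
      U ⊆ (univ : Finset (Fin 2)).image Sum.inr
        ∨ U ⊆ (univ : Finset (Fin m)).image Sum.inl := by
  constructor
  · intro hnd
    by_contra hbad
    push_neg at hbad
    obtain ⟨h1, h2⟩ := hbad
    rw [Finset.not_subset] at h1 h2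
    obtain ⟨x, hxU, hx⟩ := h1
    obtain ⟨y, hyU, hy⟩ := h2
    obtain ⟨a, rfl⟩ : ∃ a : Fin m, x = Sum.inl a := by
      rcases x with a | j
      · exact ⟨a, rfl⟩
      · exfalso; apply hx; simp
    obtain ⟨j, rfl⟩ : ∃ j : Fin 2, y = Sum.inr j := by
      rcases y with b | j
      · exfalso; apply hy; simp
      · exact ⟨j, rfl⟩
    apply hnd
    rintro (c | i)
    · by_cases hc : Sum.inl c ∈ U
      · exact Or.inl hc
      · refine Or.inr ⟨Sum.inl a, hxU, ?_⟩
        rw [lollipop_adj]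
        have hac : a ≠ c := by rintro rfl; exact hc hxU
        exact ⟨by simp [hac], Or.inl hac⟩
    · by_cases hij : j = i
      · subst hij; exact Or.inl hyU
      · refine Or.inr ⟨Sum.inr j, hyU, ?_⟩
        rw [lollipop_adj]
        refine ⟨by simp [hij], ?_⟩
        have h1 := j.isLt
        have h2 := i.isLt
        have hne : (j : ℕ) ≠ (i : ℕ) := fun h => hij (Fin.ext h)
        rcases Nat.lt_or_ge (j : ℕ) (i : ℕ) with hlt | hge
        · exact Or.inl (show (j : ℕ) + 1 = (i : ℕ) by omega)
        · exact Or.inr (show (i : ℕ) + 1 = (j : ℕ) by omega)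
  · rintro (h | h) hdom
    · rcases hdom (Sum.inl ⟨1, by omega⟩) with hin | ⟨u, huU, hadj⟩
      · have := h hin; simp at this
      · have := h huU
        simp only [mem_image, mem_univ, true_and] at this
        obtain ⟨j, rfl⟩ := this
        rw [lollipop_adj] at hadj
        rcases hadj.2 with hr | hr
        · exact hr
        · obtain ⟨ha, -⟩ := hr
          simp at ha
    · rcases hdom (Sum.inr 1) with hin | ⟨u, huU, hadj⟩
      · have := h hin; simp at this
      · have := h huU
        simp only [mem_image, mem_univ, true_and] at this
        obtain ⟨a, rfl⟩ := this
        rw [lollipop_adj] at hadj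
        rcases hadj.2 with hr | hr
        · obtain ⟨-, hb⟩ := hr
          simp at hb
        · exact hr

open Finset in
lemma notdom3 {m : ℕ} (hm : 3 ≤ m) (U : Finset (Fin m ⊕ Fin 3)) :
    ¬ Dominates (lollipop m 3) U ↔
      U ⊆ (univ : Finset (Fin 3)).image Sum.inr
        ∨ U ⊆ ((univ : Finset (Fin m)).image Sum.inl ∪ {Sum.inr 0})
        ∨ U ⊆ (((univ : Finset (Fin m)).erase ⟨0, by omega⟩).image Sum.inl ∪ {Sum.inr 2}) := by
  constructor
  · intro hnd
    by_contra hbad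
    push_neg at hbad
    obtain ⟨h1, h2, h3⟩ := hbad
    rw [Finset.not_subset] at h1 h2 h3
    obtain ⟨x, hxU, hx⟩ := h1
    obtain ⟨y, hyU, hy⟩ := h2
    obtain ⟨z, hzU, hz⟩ := h3
    obtain ⟨a, rfl⟩ : ∃ a : Fin m, x = Sum.inl a := by
      rcases x with a | j
      · exact ⟨a, rfl⟩
      · exfalso; apply hx; simp
    -- y is inr 1 or inr 2
    have hy' : y = Sum.inr 1 ∨ y = Sum.inr 2 := by
      rcases y with b | j
      · exfalso; apply hy; simp
      · simp only [mem_union, mem_image, mem_univ, true_and, mem_singleton] at hy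
        have hj := j.isLt
        have hj0 : (j : ℕ) ≠ 0 := by
          intro h0
          exact hy (Or.inr (by congr 1; ext; simpa using h0))
        rcases Nat.lt_or_ge (j : ℕ) 2 with h2' | h2'
        · left; congr 1; ext; simp; omega
        · right; congr 1; ext; simp; omega
    -- z is inl 0 or inr 0 or inr 1
    have hz' : z = Sum.inl ⟨0, by omega⟩ ∨ z = Sum.inr 0 ∨ z = Sum.inr 1 := by
      rcases z with b | j
      · left
        simp only [mem_union, mem_image, mem_erase, mem_univ, and_true, mem_singleton] at hz
        have : b = ⟨0, by omega⟩ := by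
          by_contra hne; exact hz (Or.inl ⟨b, hne, rfl⟩)
        rw [this]
      · simp only [mem_union, mem_image, mem_erase, mem_univ, and_true, mem_singleton] at hz
        have hj := j.isLt
        have hj2 : (j : ℕ) ≠ 2 := by
          intro h2'
          exact hz (Or.inr (by congr 1; ext; simpa using h2'))
        rcases Nat.lt_or_ge (j : ℕ) 1 with h1' | h1'
        · right; left; congr 1; ext; simp; omega
        · right; right; congr 1; ext; simp; omega
    apply hnd
    rintro (c | i)
    · by_cases hc : Sum.inl c ∈ U
      · exact Or.inl hc
      · refine Or.inr ⟨Sum.inl a, hxU, ?_⟩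
        rw [lollipop_adj]
        have hac : a ≠ c := by rintro rfl; exact hc hxU
        exact ⟨by simp [hac], Or.inl hac⟩
    · have hi := i.isLt
      rcases Nat.lt_or_ge (i : ℕ) 1 with hi0 | hi1
      · -- i = 0
        have : i = 0 := by ext; simpa using hi0
        subst this
        rcases hz' with rfl | rfl | rfl
        · refine Or.inr ⟨_, hzU, ?_⟩
          rw [lollipop_adj]
          exact ⟨by simp, Or.inl ⟨rfl, by simp⟩⟩
        · exact Or.inl hzU
        · refine Or.inr ⟨_, hzU, ?_⟩
          rw [lollipop_adj]
          refine ⟨by simp, Or.inr ?_⟩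
          show (0 : Fin 3).val + 1 = ((1 : Fin 3) : ℕ)
          simp
      · rcases Nat.lt_or_ge (i : ℕ) 2 with hi2 | hi2
        · -- i = 1
          have : i = 1 := by ext; simp; omega
          subst this
          rcases hy' with rfl | rfl
          · exact Or.inl hyU
          · refine Or.inr ⟨_, hyU, ?_⟩
            rw [lollipop_adj]
            refine ⟨by simp, Or.inr ?_⟩
            show (1 : Fin 3).val + 1 = ((2 : Fin 3) : ℕ)
            simp
        · -- i = 2
          have : i = 2 := by ext; simp; omega
          subst this
          rcases hy' with rfl | rfl
          · refine Or.inr ⟨_, hyU, ?_⟩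
            rw [lollipop_adj]
            refine ⟨by simp, Or.inl ?_⟩
            show (1 : Fin 3).val + 1 = ((2 : Fin 3) : ℕ)
            simp
          · exact Or.inl hyU
  · rintro (h | h | h) hdom
    · rcases hdom (Sum.inl ⟨1, by omega⟩) with hin | ⟨u, huU, hadj⟩
      · have := h hin; simp at this
      · have := h huU
        simp only [mem_image, mem_univ, true_and] at this
        obtain ⟨j, rfl⟩ := this
        rw [lollipop_adj] at hadj
        rcases hadj.2 with hr | hr
        · exact hr
        · obtain ⟨ha, -⟩ := hr
          simp at ha
    · rcases hdom (Sum.inr 2) with hin | ⟨u, huU, hadj⟩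
      · have := h hin
        simp only [mem_union, mem_image, mem_univ, true_and, mem_singleton] at this
        rcases this with ⟨a, ha⟩ | hh
        · exact absurd ha (by simp)
        · exact absurd hh (by simp)
      · have := h huU
        simp only [mem_union, mem_image, mem_univ, true_and, mem_singleton] at this
        rcases this with ⟨a, rfl⟩ | rfl
        · rw [lollipop_adj] at hadj
          rcases hadj.2 with hr | hr
          · obtain ⟨-, hb⟩ := hr
            simp at hb
          · exact hr
        · rw [lollipop_adj] at hadj
          rcases hadj.2 with hr | hr
          · simp [lollipopRel] at hr
          · simp [lollipopRel] at hr
    · rcases hdom (Sum.inr 0) with hin | ⟨u, huU, hadj⟩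
      · have := h hin
        simp only [mem_union, mem_image, mem_erase, mem_univ, and_true, mem_singleton] at this
        rcases this with ⟨a, -, ha⟩ | hh
        · exact absurd ha (by simp)
        · exact absurd hh (by simp)
      · have := h huU
        simp only [mem_union, mem_image, mem_erase, mem_univ, and_true, mem_singleton] at this
        rcases this with ⟨a, ha0, rfl⟩ | rfl
        · rw [lollipop_adj] at hadj
          rcases hadj.2 with hr | hr
          · obtain ⟨ha, -⟩ := hr
            exact ha0 (by ext; simpa using ha)
          · exact hr
        · rw [lollipop_adj] at hadj
          rcases hadj.2 with hr | hr
          · simp [lollipopRel] at hr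
          · simp [lollipopRel] at hr

open Finset in
lemma key1 {m : ℕ} (hm : 3 ≤ m) (i : ℕ) :
    domCount (lollipop m 1) i + (m - 1).choose i + Nat.choose 1 i
      = (m + 1).choose i + Nat.choose 0 i := by
  have B1 := ((univ : Finset (Fin m)).erase ⟨0, by omega⟩).image (Sum.inl : Fin m → Fin m ⊕ Fin 1)
  have h := count_two (lollipop m 1)
    (((univ : Finset (Fin m)).erase ⟨0, by omega⟩).image Sum.inl)
    {Sum.inr ⟨0, Nat.one_pos⟩} (fun U => notdom1 hm U) i
  have hc1 : (((univ : Finset (Fin m)).erase ⟨0, by omega⟩).image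
      (Sum.inl : Fin m → Fin m ⊕ Fin 1)).card = m - 1 := by
    rw [card_image_of_injective _ Sum.inl_injective, card_erase_of_mem (mem_univ _), card_univ,
      Fintype.card_fin]
  have hc2 : ({Sum.inr ⟨0, Nat.one_pos⟩} : Finset (Fin m ⊕ Fin 1)).card = 1 := rfl
  have hcV : Fintype.card (Fin m ⊕ Fin 1) = m + 1 := by simp
  have hint : (((univ : Finset (Fin m)).erase ⟨0, by omega⟩).image
      (Sum.inl : Fin m → Fin m ⊕ Fin 1) ∩ {Sum.inr ⟨0, Nat.one_pos⟩}).card = 0 := by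
    rw [Finset.card_eq_zero]
    ext x
    simp only [mem_inter, mem_image, mem_singleton, notMem_empty, iff_false, not_and]
    rintro ⟨a, -, rfl⟩
    simp
  rw [hc1, hc2, hcV, hint] at h
  exact h

open Finset in
lemma key2 {m : ℕ} (hm : 3 ≤ m) (i : ℕ) :
    domCount (lollipop m 2) i + Nat.choose 2 i + m.choose i
      = (m + 2).choose i + Nat.choose 0 i := by
  have h := count_two (lollipop m 2)
    ((univ : Finset (Fin 2)).image Sum.inr)
    ((univ : Finset (Fin m)).image Sum.inl) (fun U => notdom2 hm U) i
  have hc1 : (((univ : Finset (Fin 2)).image (Sum.inr : Fin 2 → Fin m ⊕ Fin 2))).card = 2 := by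
    rw [card_image_of_injective _ Sum.inr_injective, card_univ, Fintype.card_fin]
  have hc2 : (((univ : Finset (Fin m)).image (Sum.inl : Fin m → Fin m ⊕ Fin 2))).card = m := by
    rw [card_image_of_injective _ Sum.inl_injective, card_univ, Fintype.card_fin]
  have hcV : Fintype.card (Fin m ⊕ Fin 2) = m + 2 := by simp
  have hint : ((univ : Finset (Fin 2)).image (Sum.inr : Fin 2 → Fin m ⊕ Fin 2)
      ∩ (univ : Finset (Fin m)).image Sum.inl).card = 0 := by
    rw [Finset.card_eq_zero]
    ext x
    simp only [mem_inter, mem_image, mem_univ, true_and, notMem_empty, iff_false, not_and]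
    rintro ⟨a, rfl⟩
    simp
  rw [hc1, hc2, hcV, hint] at h
  exact h

open Finset in
lemma key3 {m : ℕ} (hm : 3 ≤ m) (i : ℕ) :
    domCount (lollipop m 3) i + Nat.choose 3 i + (m + 1).choose i + m.choose i + Nat.choose 0 i
      = (m + 3).choose i + Nat.choose 1 i + Nat.choose 1 i + (m - 1).choose i := by
  have h := count_three (lollipop m 3)
    ((univ : Finset (Fin 3)).image Sum.inr)
    ((univ : Finset (Fin m)).image Sum.inl ∪ {Sum.inr 0})
    (((univ : Finset (Fin m)).erase ⟨0, by omega⟩).image Sum.inl ∪ {Sum.inr 2})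
    (fun U => notdom3 hm U) i
  have hc1 : (((univ : Finset (Fin 3)).image (Sum.inr : Fin 3 → Fin m ⊕ Fin 3))).card = 3 := by
    rw [card_image_of_injective _ Sum.inr_injective, card_univ, Fintype.card_fin]
  have hc2 : ((univ : Finset (Fin m)).image (Sum.inl : Fin m → Fin m ⊕ Fin 3)
      ∪ {Sum.inr 0}).card = m + 1 := by
    rw [Finset.card_union_of_disjoint, card_image_of_injective _ Sum.inl_injective, card_univ,
      Fintype.card_fin]
    · rfl
    · rw [Finset.disjoint_right]
      rintro x hx
      simp only [mem_singleton] at hx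
      subst hx
      simp
  have hc3 : (((univ : Finset (Fin m)).erase ⟨0, by omega⟩).image (Sum.inl : Fin m → Fin m ⊕ Fin 3)
      ∪ {Sum.inr 2}).card = m := by
    rw [Finset.card_union_of_disjoint, card_image_of_injective _ Sum.inl_injective,
      card_erase_of_mem (mem_univ _), card_univ, Fintype.card_fin, Finset.card_singleton]
    · omega
    · rw [Finset.disjoint_right]
      rintro x hx
      simp only [mem_singleton] at hx
      subst hx
      simp
  have hcV : Fintype.card (Fin m ⊕ Fin 3) = m + 3 := by simp
  have h12 : ((univ : Finset (Fin 3)).image (Sum.inr : Fin 3 → Fin m ⊕ Fin 3)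
      ∩ ((univ : Finset (Fin m)).image Sum.inl ∪ {Sum.inr 0})).card = 1 := by
    have : ((univ : Finset (Fin 3)).image (Sum.inr : Fin 3 → Fin m ⊕ Fin 3)
        ∩ ((univ : Finset (Fin m)).image Sum.inl ∪ {Sum.inr 0})) = {Sum.inr 0} := by
      ext x
      rcases x with a | j <;> simp
    rw [this]; rfl
  have h13 : ((univ : Finset (Fin 3)).image (Sum.inr : Fin 3 → Fin m ⊕ Fin 3)
      ∩ (((univ : Finset (Fin m)).erase ⟨0, by omega⟩).image Sum.inl ∪ {Sum.inr 2})).card = 1 := by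
    have : ((univ : Finset (Fin 3)).image (Sum.inr : Fin 3 → Fin m ⊕ Fin 3)
        ∩ (((univ : Finset (Fin m)).erase ⟨0, by omega⟩).image Sum.inl ∪ {Sum.inr 2}))
        = {Sum.inr 2} := by
      ext x
      rcases x with a | j <;> simp
    rw [this]; rfl
  have h23 : (((univ : Finset (Fin m)).image (Sum.inl : Fin m → Fin m ⊕ Fin 3) ∪ {Sum.inr 0})
      ∩ (((univ : Finset (Fin m)).erase ⟨0, by omega⟩).image Sum.inl ∪ {Sum.inr 2})).card
      = m - 1 := by
    have : (((univ : Finset (Fin m)).image (Sum.inl : Fin m → Fin m ⊕ Fin 3) ∪ {Sum.inr 0})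
        ∩ (((univ : Finset (Fin m)).erase ⟨0, by omega⟩).image Sum.inl ∪ {Sum.inr 2}))
        = ((univ : Finset (Fin m)).erase ⟨0, by omega⟩).image Sum.inl := by
      ext x
      rcases x with a | j <;> simp <;> (rintro rfl; decide)
    rw [this, card_image_of_injective _ Sum.inl_injective, card_erase_of_mem (mem_univ _),
      card_univ, Fintype.card_fin]
  have h123 : ((univ : Finset (Fin 3)).image (Sum.inr : Fin 3 → Fin m ⊕ Fin 3)
      ∩ ((univ : Finset (Fin m)).image Sum.inl ∪ {Sum.inr 0})
      ∩ (((univ : Finset (Fin m)).erase ⟨0, by omega⟩).image Sum.inl ∪ {Sum.inr 2})).card = 0 := by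
    rw [Finset.card_eq_zero]
    ext x
    rcases x with a | j <;> simp <;> (rintro rfl; decide)
  rw [hc1, hc2, hc3, hcV, h12, h13, h23, h123] at h
  omega

lemma pascal1 {m : ℕ} (hm : 1 ≤ m) (j : ℕ) :
    m.choose (j + 1) = (m - 1).choose (j + 1) + (m - 1).choose j := by
  have h : (m - 1 + 1).choose (j + 1) = (m - 1).choose j + (m - 1).choose (j + 1) :=
    Nat.choose_succ_succ _ _
  rw [Nat.sub_add_cancel hm] at h
  omega

lemma pascal2 {m : ℕ} (hm : 1 ≤ m) (j : ℕ) :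
    (m + 1).choose (j + 1) = (m - 1).choose (j + 1) + m.choose j + (m - 1).choose j := by
  have p1 : (m + 1).choose (j + 1) = m.choose j + m.choose (j + 1) := Nat.choose_succ_succ _ _
  have p2 := pascal1 hm j
  omega



theorem lollipop_unimodal_small (m : ℕ) (hm : 3 ≤ m) :
    UnimodalWithMode (domCount (lollipop m 1)) (m / 2 + 1) ∧
    UnimodalWithMode (domCount (lollipop m 2)) ((m + 1) / 2 + 1) ∧
    UnimodalWithMode (domCount (lollipop m 3)) (m / 2 + 2) := by
  refine ⟨⟨?_, ?_⟩, ⟨?_, ?_⟩, ⟨?_, ?_⟩⟩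
  · -- n = 1, increasing
    intro i hi
    rcases Nat.eq_zero_or_pos i with rfl | hpos
    · have e0 := key1 hm 0
      simp only [Nat.choose_zero_right] at e0
      omega
    · obtain ⟨j, rfl⟩ : ∃ j, i = j + 1 := ⟨i - 1, by omega⟩
      have hA := key1 hm (j + 1)
      have hB := key1 hm (j + 2)
      have P1 := pascal2 (by omega : 1 ≤ m) j
      have P2 := pascal2 (by omega : 1 ≤ m) (j + 1)
      have M1 : m.choose j ≤ m.choose (j + 1) := choose_mono_up (by omega)
      have M2 : (m - 1).choose j ≤ (m - 1).choose (j + 1) := choose_mono_up (by omega)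
      have M3 : Nat.choose 1 (j + 2) ≤ Nat.choose 1 (j + 1) := choose_mono_down (by omega)
      have Z1 : Nat.choose 0 (j + 1) = 0 := Nat.choose_eq_zero_of_lt (by omega)
      have Z2 : Nat.choose 0 (j + 2) = 0 := Nat.choose_eq_zero_of_lt (by omega)
      simp only [show j + 1 + 1 = j + 2 by omega, show j + 2 + 1 = j + 3 by omega,
        show m + 1 - 1 = m by omega, show m + 2 - 1 = m + 1 by omega,
        show m + 1 + 1 = m + 2 by omega, show m + 2 + 1 = m + 3 by omega] at hA hB P1 P2 ⊢
      omega
  · -- n = 1, decreasing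
    intro i hi
    obtain ⟨j, rfl⟩ : ∃ j, i = j + 1 := ⟨i - 1, by omega⟩
    have hA := key1 hm (j + 1)
    have hB := key1 hm (j + 2)
    have P1 := pascal2 (by omega : 1 ≤ m) j
    have P2 := pascal2 (by omega : 1 ≤ m) (j + 1)
    have M1 : m.choose (j + 1) ≤ m.choose j := choose_mono_down (by omega)
    have M2 : (m - 1).choose (j + 1) ≤ (m - 1).choose j := choose_mono_down (by omega)
    have Z1 : Nat.choose 0 (j + 1) = 0 := Nat.choose_eq_zero_of_lt (by omega)
    have Z2 : Nat.choose 0 (j + 2) = 0 := Nat.choose_eq_zero_of_lt (by omega)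
    have Z3 : Nat.choose 1 (j + 1) = 0 := Nat.choose_eq_zero_of_lt (by omega)
    have Z4 : Nat.choose 1 (j + 2) = 0 := Nat.choose_eq_zero_of_lt (by omega)
    simp only [show j + 1 + 1 = j + 2 by omega, show j + 2 + 1 = j + 3 by omega,
      show m + 1 - 1 = m by omega, show m + 2 - 1 = m + 1 by omega,
      show m + 1 + 1 = m + 2 by omega, show m + 2 + 1 = m + 3 by omega] at hA hB P1 P2 ⊢
    omega
  · -- n = 2, increasing
    intro i hi
    rcases Nat.eq_zero_or_pos i with rfl | hpos
    · have e0 := key2 hm 0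
      have e1 := key2 hm 1
      simp only [Nat.choose_zero_right, Nat.choose_one_right] at e0 e1
      have : Nat.choose 0 1 = 0 := Nat.choose_eq_zero_of_lt (by omega)
      have h2 : Nat.choose 2 1 = 2 := rfl
      omega
    · obtain ⟨j, rfl⟩ : ∃ j, i = j + 1 := ⟨i - 1, by omega⟩
      have hA := key2 hm (j + 1)
      have hB := key2 hm (j + 2)
      have P1 := pascal2 (by omega : 1 ≤ m + 1) j
      have P2 := pascal2 (by omega : 1 ≤ m + 1) (j + 1)
      have M1 : (m + 1).choose j ≤ (m + 1).choose (j + 1) := choose_mono_up (by omega)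
      have M2 : m.choose j ≤ m.choose (j + 1) := choose_mono_up (by omega)
      have M3 : Nat.choose 2 (j + 2) ≤ Nat.choose 2 (j + 1) := choose_mono_down (by omega)
      have Z1 : Nat.choose 0 (j + 1) = 0 := Nat.choose_eq_zero_of_lt (by omega)
      have Z2 : Nat.choose 0 (j + 2) = 0 := Nat.choose_eq_zero_of_lt (by omega)
      simp only [show j + 1 + 1 = j + 2 by omega, show j + 2 + 1 = j + 3 by omega,
        show m + 1 - 1 = m by omega, show m + 2 - 1 = m + 1 by omega,
        show m + 1 + 1 = m + 2 by omega, show m + 2 + 1 = m + 3 by omega] at hA hB P1 P2 ⊢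
      omega
  · -- n = 2, decreasing
    intro i hi
    obtain ⟨j, rfl⟩ : ∃ j, i = j + 1 := ⟨i - 1, by omega⟩
    have hA := key2 hm (j + 1)
    have hB := key2 hm (j + 2)
    have P1 := pascal2 (by omega : 1 ≤ m + 1) j
    have P2 := pascal2 (by omega : 1 ≤ m + 1) (j + 1)
    have M1 : (m + 1).choose (j + 1) ≤ (m + 1).choose j := choose_mono_down (by omega)
    have M2 : m.choose (j + 1) ≤ m.choose j := choose_mono_down (by omega)
    have Z1 : Nat.choose 0 (j + 1) = 0 := Nat.choose_eq_zero_of_lt (by omega)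
    have Z2 : Nat.choose 0 (j + 2) = 0 := Nat.choose_eq_zero_of_lt (by omega)
    have Z3 : Nat.choose 2 (j + 1) = 0 := Nat.choose_eq_zero_of_lt (by omega)
    have Z4 : Nat.choose 2 (j + 2) = 0 := Nat.choose_eq_zero_of_lt (by omega)
    simp only [show j + 1 + 1 = j + 2 by omega, show j + 2 + 1 = j + 3 by omega,
      show m + 1 - 1 = m by omega, show m + 2 - 1 = m + 1 by omega,
      show m + 1 + 1 = m + 2 by omega, show m + 2 + 1 = m + 3 by omega] at hA hB P1 P2 ⊢
    omega
  · -- n = 3, increasing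
    intro i hi
    rcases Nat.lt_or_ge i 2 with hsmall | hbig
    · -- i = 0 or 1 : domCount is 0 there
      interval_cases i
      · have e0 := key3 hm 0
        simp only [Nat.choose_zero_right] at e0
        omega
      · have e1 := key3 hm 1
        simp only [Nat.choose_one_right] at e1
        have h3 : Nat.choose 3 1 = 3 := rfl
        have h1 : Nat.choose 1 1 = 1 := rfl
        have h0 : Nat.choose 0 1 = 0 := rfl
        omega
    · obtain ⟨j, rfl⟩ : ∃ j, i = j + 2 := ⟨i - 2, by omega⟩
      have hA := key3 hm (j + 2)
      have hB := key3 hm (j + 3)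
      have P1 := pascal2 (by omega : 1 ≤ m + 2) (j + 1)
      have P1' := pascal2 (by omega : 1 ≤ m + 2) (j + 2)
      have P2 := pascal2 (by omega : 1 ≤ m) j
      have P2' := pascal2 (by omega : 1 ≤ m) (j + 1)
      have P3 := pascal1 (by omega : 1 ≤ m) (j + 1)
      have P3' := pascal1 (by omega : 1 ≤ m) (j + 2)
      have M1 : (m + 2).choose (j + 1) ≤ (m + 2).choose (j + 2) := choose_mono_up (by omega)
      have M2 : m.choose j ≤ m.choose (j + 1) := choose_mono_up (by omega)
      have M3 : (m - 1).choose j ≤ (m - 1).choose (j + 1) := choose_mono_up (by omega)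
      have M4 : Nat.choose 3 (j + 3) ≤ Nat.choose 3 (j + 2) := choose_mono_down (by omega)
      have Z1 : Nat.choose 0 (j + 2) = 0 := Nat.choose_eq_zero_of_lt (by omega)
      have Z2 : Nat.choose 0 (j + 3) = 0 := Nat.choose_eq_zero_of_lt (by omega)
      have Z3 : Nat.choose 1 (j + 2) = 0 := Nat.choose_eq_zero_of_lt (by omega)
      have Z4 : Nat.choose 1 (j + 3) = 0 := Nat.choose_eq_zero_of_lt (by omega)
      simp only [show j + 1 + 1 = j + 2 by omega, show j + 2 + 1 = j + 3 by omega,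
        show m + 1 - 1 = m by omega, show m + 2 - 1 = m + 1 by omega,
        show m + 1 + 1 = m + 2 by omega, show m + 2 + 1 = m + 3 by omega] at hA hB P1 P1' P2 P2' P3 P3' ⊢
      omega
  · -- n = 3, decreasing
    intro i hi
    rcases Nat.lt_or_ge i 4 with hsmall | hbig
    · -- then i = 3 and m = 3
      have hm3 : m = 3 := by omega
      have hi3 : i = 3 := by omega
      subst hm3
      subst hi3
      have hA := key3 (le_refl 3) 3
      have hB := key3 (le_refl 3) 4
      norm_num [Nat.choose] at hA hB ⊢
      omega
    · obtain ⟨j, rfl⟩ : ∃ j, i = j + 2 := ⟨i - 2, by omega⟩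
      have hA := key3 hm (j + 2)
      have hB := key3 hm (j + 3)
      have P1 := pascal2 (by omega : 1 ≤ m + 2) (j + 1)
      have P1' := pascal2 (by omega : 1 ≤ m + 2) (j + 2)
      have P2 := pascal2 (by omega : 1 ≤ m) j
      have P2' := pascal2 (by omega : 1 ≤ m) (j + 1)
      have P3 := pascal1 (by omega : 1 ≤ m) (j + 1)
      have P3' := pascal1 (by omega : 1 ≤ m) (j + 2)
      have M1 : (m + 2).choose (j + 2) ≤ (m + 2).choose (j + 1) := choose_mono_down (by omega)
      have M2 : m.choose (j + 1) ≤ m.choose j := choose_mono_down (by omega)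
      have M3 : (m - 1).choose (j + 1) ≤ (m - 1).choose j := choose_mono_down (by omega)
      have Z1 : Nat.choose 0 (j + 2) = 0 := Nat.choose_eq_zero_of_lt (by omega)
      have Z2 : Nat.choose 0 (j + 3) = 0 := Nat.choose_eq_zero_of_lt (by omega)
      have Z3 : Nat.choose 1 (j + 2) = 0 := Nat.choose_eq_zero_of_lt (by omega)
      have Z4 : Nat.choose 1 (j + 3) = 0 := Nat.choose_eq_zero_of_lt (by omega)
      have Z5 : Nat.choose 3 (j + 2) = 0 := Nat.choose_eq_zero_of_lt (by omega)
      have Z6 : Nat.choose 3 (j + 3) = 0 := Nat.choose_eq_zero_of_lt (by omega)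
      simp only [show j + 1 + 1 = j + 2 by omega, show j + 2 + 1 = j + 3 by omega,
        show m + 1 - 1 = m by omega, show m + 2 - 1 = m + 1 by omega,
        show m + 1 + 1 = m + 2 by omega, show m + 2 + 1 = m + 3 by omega] at hA hB P1 P1' P2 P2' P3 P3' ⊢
      omega
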